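/- Let C be a saturated multi-convex set in a real projective space and p a point not in C. Then there exists an irreducible convex set (the complement of a projective hyperplane) containing C and avoiding p. -/

import Mathlib

open scoped LinearAlgebra.Projectivization
open Projectivization

/-- The "positive" projective segment joining the points represented by `u` and `v`:
`{π(a•u + b•v) : a*b ≥ 0, (a,b) ≠ (0,0)}`. -/
def projSeg {W : Type*} [AddCommGroup W] [Module ℝ W] (u v : W) : Set (ℙ ℝ W) :=
  {x | ∃ (a b : ℝ) (h : a • u + b • v ≠ 0),
    0 ≤ a * b ∧ x = Projectivization.mk ℝ (a • u + b • v) h}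

/-- The "negative" projective segment joining the points represented by `u` and `v`:
`{π(a•u + b•v) : a*b ≤ 0, (a,b) ≠ (0,0)}`. -/
def projSegN {W : Type*} [AddCommGroup W] [Module ℝ W] (u v : W) : Set (ℙ ℝ W) :=
  {x | ∃ (a b : ℝ) (h : a • u + b • v ≠ 0),
    a * b ≤ 0 ∧ x = Projectivization.mk ℝ (a • u + b • v) h}

/-- A set in a real projective space is projective convex if for any two distinct points of it,
exactly one of the two projective segments joining them is contained in it. -/
def IsProjConvex {W : Type*} [AddCommGroup W] [Module ℝ W] (S : Set (ℙ ℝ W)) : Prop :=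
  ∀ p ∈ S, ∀ q ∈ S, p ≠ q →
    Xor' (projSeg p.rep q.rep ⊆ S) (projSegN p.rep q.rep ⊆ S)

/-- The quotient topology on a real projective space. -/
noncomputable instance projTopInst {W : Type*} [NormedAddCommGroup W] [NormedSpace ℝ W] :
    TopologicalSpace (ℙ ℝ W) :=
  instTopologicalSpaceQuotient

/-- A saturated multi-convex set: an intersection of a nonempty family of open projective
convex sets. -/
def IsSatMultiConvex {W : Type*} [NormedAddCommGroup W] [NormedSpace ℝ W]
    (C : Set (ℙ ℝ W)) : Prop :=
  ∃ F : Set (Set (ℙ ℝ W)), F.Nonempty ∧ (∀ S ∈ F, IsOpen S ∧ IsProjConvex S) ∧ C = ⋂₀ F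

namespace SepAux

variable {V : Type*} [NormedAddCommGroup V] [NormedSpace ℝ V]

/-- The cone over a set of the projective space. -/
def coneT (Ω : Set (ℙ ℝ V)) : Set V :=
  {v : V | ∃ h : v ≠ 0, Projectivization.mk ℝ v h ∈ Ω}

variable {Ω : Set (ℙ ℝ V)}

lemma ne_zero_of_mem {v : V} (hv : v ∈ coneT Ω) : v ≠ 0 := by
  obtain ⟨h, -⟩ := hv; exact h

lemma mk_mem {v : V} (hv : v ∈ coneT Ω) (h : v ≠ 0) : Projectivization.mk ℝ v h ∈ Ω := by
  obtain ⟨h', hm⟩ := hv; exact hm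

lemma smul_mem {v : V} (hv : v ∈ coneT Ω) {t : ℝ} (ht : t ≠ 0) : t • v ∈ coneT Ω := by
  obtain ⟨h, hm⟩ := hv
  have h' : t • v ≠ 0 := smul_ne_zero ht h
  refine ⟨h', ?_⟩
  have : Projectivization.mk ℝ (t • v) h' = Projectivization.mk ℝ v h :=
    (mk_eq_mk_iff' ℝ _ _ _ _).2 ⟨t, rfl⟩
  rwa [this]

lemma neg_mem {v : V} (hv : v ∈ coneT Ω) : -v ∈ coneT Ω := by
  have := smul_mem hv (t := -1) (by norm_num)
  rwa [neg_one_smul] at this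

lemma isOpen_coneT (hΩ : IsOpen Ω) : IsOpen (coneT Ω) := by
  have h1 : IsOpen {v : V | v ≠ 0} := isOpen_ne
  have hq : Continuous (fun x : {v : V // v ≠ 0} => Projectivization.mk ℝ x.1 x.2) :=
    continuous_quotient_mk'
  have he : coneT Ω =
      Subtype.val '' ((fun x : {v : V // v ≠ 0} => Projectivization.mk ℝ x.1 x.2) ⁻¹' Ω) := by
    ext v
    constructor
    · rintro ⟨h, hm⟩; exact ⟨⟨v, h⟩, hm, rfl⟩
    · rintro ⟨⟨w, hw⟩, hm, rfl⟩; exact ⟨hw, hm⟩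
  rw [he]
  exact h1.isOpenMap_subtype_val _ (hq.isOpen_preimage _ hΩ)

lemma exists_rep_eq (v : V) (h : v ≠ 0) :
    ∃ c : ℝ, c ≠ 0 ∧ (Projectivization.mk ℝ v h).rep = c • v := by
  obtain ⟨a, ha⟩ := exists_smul_eq_mk_rep ℝ v h
  exact ⟨(a : ℝ), a.ne_zero, by rw [← ha, Units.smul_def]⟩

lemma mk_eq_mk_of_eq {v w : V} (h : v ≠ 0) (e : v = w) :
    Projectivization.mk ℝ v h = Projectivization.mk ℝ w (e ▸ h) := by subst e; rfl

/-- The "positive quadrant" property. -/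
def QQ (Ω : Set (ℙ ℝ V)) (u v : V) : Prop :=
  ∀ a b : ℝ, 0 ≤ a → 0 ≤ b → ∀ _ : a • u + b • v ≠ 0, a • u + b • v ∈ coneT Ω

lemma Q_of_projSeg {u v : V} {c d : ℝ} (hc : c ≠ 0) (hd : d ≠ 0) (hcd : 0 < c * d)
    (hS : projSeg (c • u) (d • v) ⊆ Ω) : QQ Ω u v := by
  intro a b ha hb h
  have e1 : a • u + b • v = (a / c) • (c • u) + (b / d) • (d • v) := by
    rw [smul_smul, smul_smul, div_mul_cancel₀ _ hc, div_mul_cancel₀ _ hd]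
  have hs : 0 ≤ (a / c) * (b / d) := by
    rw [div_mul_div_comm]
    exact div_nonneg (mul_nonneg ha hb) hcd.le
  rw [e1] at h ⊢
  exact ⟨h, hS ⟨_, _, h, hs, rfl⟩⟩

lemma projSegN_eq (r s : V) : projSegN r s = projSeg r (-s) := by
  ext x
  constructor
  · rintro ⟨a, b, h, hab, rfl⟩
    have e : a • r + (-b) • (-s) = a • r + b • s := by
      rw [neg_smul, smul_neg, neg_neg]
    refine ⟨a, -b, by rw [e]; exact h, by nlinarith, ?_⟩
    rw [mk_eq_mk_of_eq _ e]
  · rintro ⟨a, b, h, hab, rfl⟩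
    have e : a • r + (-b) • s = a • r + b • (-s) := by
      rw [neg_smul, smul_neg]
    refine ⟨a, -b, by rw [e]; exact h, by nlinarith, ?_⟩
    rw [mk_eq_mk_of_eq _ e]

lemma comb (hconv : IsProjConvex Ω) {u v : V} (hu : u ∈ coneT Ω) (hv : v ∈ coneT Ω) :
    QQ Ω u v ∨ QQ Ω u (-v) := by
  obtain ⟨hu0, huΩ⟩ := hu
  obtain ⟨hv0, hvΩ⟩ := hv
  by_cases heq : Projectivization.mk ℝ u hu0 = Projectivization.mk ℝ v hv0
  · left
    intro a b ha hb h
    obtain ⟨t, ht⟩ := (mk_eq_mk_iff' ℝ u v hu0 hv0).1 heq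
    have e : a • u + b • v = (a * t + b) • v := by
      rw [← ht, smul_smul, ← add_smul]
    have hne : a * t + b ≠ 0 := fun hz => h (by rw [e, hz, zero_smul])
    rw [e]
    exact smul_mem ⟨hv0, hvΩ⟩ hne
  · obtain ⟨c, hc, hcr⟩ := exists_rep_eq u hu0
    obtain ⟨d, hd, hdr⟩ := exists_rep_eq v hv0
    have hx := hconv _ huΩ _ hvΩ heq
    have hvn0 : -v ≠ 0 := neg_ne_zero.2 hv0
    rcases hx with ⟨hS, -⟩ | ⟨hS, -⟩
    · rw [hcr, hdr] at hS
      rcases (mul_ne_zero hc hd).lt_or_gt with hcd | hcd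
      · right
        have e : d • v = (-d) • (-v) := by rw [neg_smul, smul_neg, neg_neg]
        rw [e] at hS
        exact Q_of_projSeg hc (neg_ne_zero.2 hd) (by nlinarith) hS
      · exact Or.inl (Q_of_projSeg hc hd hcd hS)
    · rw [hcr, hdr, projSegN_eq] at hS
      have e : -(d • v) = (-d) • v := (neg_smul d v).symm
      rw [e] at hS
      rcases (mul_ne_zero hc hd).lt_or_gt with hcd | hcd
      · exact Or.inl (Q_of_projSeg hc (neg_ne_zero.2 hd) (by nlinarith) hS)
      · right
        have e2 : (-d) • v = d • (-v) := by rw [neg_smul, smul_neg]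
        rw [e2] at hS
        exact Q_of_projSeg hc hd hcd hS

lemma line (hconv : IsProjConvex Ω) {u v : V} (hu0 : u ≠ 0) (hv0 : v ≠ 0)
    (hne : Projectivization.mk ℝ u hu0 ≠ Projectivization.mk ℝ v hv0)
    (huΩ : Projectivization.mk ℝ u hu0 ∈ Ω) (hvΩ : Projectivization.mk ℝ v hv0 ∈ Ω)
    (hall : ∀ e f : ℝ, ∀ _ : e • u + f • v ≠ 0, e • u + f • v ∈ coneT Ω) : False := by
  obtain ⟨c, hc, hcr⟩ := exists_rep_eq u hu0
  obtain ⟨d, hd, hdr⟩ := exists_rep_eq v hv0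
  have key : ∀ (a b : ℝ) (h : a • (Projectivization.mk ℝ u hu0).rep +
      b • (Projectivization.mk ℝ v hv0).rep ≠ 0),
      Projectivization.mk ℝ _ h ∈ Ω := by
    intro a b h
    have e : a • (Projectivization.mk ℝ u hu0).rep + b • (Projectivization.mk ℝ v hv0).rep
        = (a * c) • u + (b * d) • v := by
      rw [hcr, hdr, smul_smul, smul_smul]
    rw [mk_eq_mk_of_eq h e]
    exact mk_mem (hall _ _ (e ▸ h)) _
  have hS : projSeg (Projectivization.mk ℝ u hu0).rep (Projectivization.mk ℝ v hv0).rep ⊆ Ω := by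
    rintro x ⟨a, b, h, hab, rfl⟩
    exact key a b h
  have hN : projSegN (Projectivization.mk ℝ u hu0).rep (Projectivization.mk ℝ v hv0).rep ⊆ Ω := by
    rintro x ⟨a, b, h, hab, rfl⟩
    exact key a b h
  rcases hconv _ huΩ _ hvΩ hne with ⟨-, hb⟩ | ⟨-, hb⟩
  · exact hb hN
  · exact hb hS

/-- The "positive" part of the cone, relative to a base point `w`. -/
def Kset (Ω : Set (ℙ ℝ V)) (w : V) : Set V := {v : V | segment ℝ w v ⊆ coneT Ω}

variable {w : V}

lemma w_mem_Kset (hw : w ∈ coneT Ω) : w ∈ Kset Ω w := by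
  intro x hx
  rw [segment_same] at hx
  rwa [Set.mem_singleton_iff.1 hx]

lemma Kset_sub {v : V} (hv : v ∈ Kset Ω w) : v ∈ coneT Ω :=
  hv (right_mem_segment ℝ w v)

lemma Cw {v : V} (hv : v ∈ Kset Ω w) {s t : ℝ} (hs : 0 ≤ s) (ht : 0 ≤ t)
    (hst : ¬(s = 0 ∧ t = 0)) : s • w + t • v ∈ coneT Ω := by
  have hsum : 0 < s + t := by
    rcases lt_or_eq_of_le (add_nonneg hs ht) with h | h
    · exact h
    · exfalso; exact hst ⟨by linarith, by linarith⟩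
  have hseg : (s / (s + t)) • w + (t / (s + t)) • v ∈ segment ℝ w v :=
    ⟨s / (s + t), t / (s + t), div_nonneg hs hsum.le, div_nonneg ht hsum.le,
      by field_simp, rfl⟩
  have hmem := hv hseg
  have e : s • w + t • v = (s + t) • ((s / (s + t)) • w + (t / (s + t)) • v) := by
    rw [smul_add, smul_smul, smul_smul, mul_div_cancel₀ _ hsum.ne', mul_div_cancel₀ _ hsum.ne']
  rw [e]
  exact smul_mem hmem hsum.ne'

lemma Kset_smul {v : V} (hv : v ∈ Kset Ω w) {t : ℝ} (ht : 0 < t) : t • v ∈ Kset Ω w := by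
  rintro x ⟨a, b, ha, hb, hab, rfl⟩
  have e : a • w + b • (t • v) = a • w + (b * t) • v := by rw [smul_smul]
  rw [e]
  refine Cw hv ha (by positivity) ?_
  rintro ⟨h1, h2⟩
  have hb0 : b = 0 := by
    rcases mul_eq_zero.1 h2 with h | h
    · exact h
    · exact absurd h ht.ne'
  rw [h1, hb0] at hab; norm_num at hab

lemma Kset_open (hΩo : IsOpen Ω) : IsOpen (Kset Ω w) := by
  rw [Metric.isOpen_iff]
  intro v hv
  have hcs : IsCompact (segment ℝ w v) := by
    rw [segment_eq_image']
    exact isCompact_Icc.image (by continuity)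
  obtain ⟨δ, hδ, hth⟩ := hcs.exists_thickening_subset_open (isOpen_coneT hΩo) hv
  refine ⟨δ, hδ, ?_⟩
  rintro v' hv' x ⟨a, b, ha, hb, hab, rfl⟩
  apply hth
  rw [Metric.mem_thickening_iff]
  refine ⟨a • w + b • v, ⟨a, b, ha, hb, hab, rfl⟩, ?_⟩
  have e : (a • w + b • v') - (a • w + b • v) = b • (v' - v) := by
    rw [smul_sub]; abel
  rw [dist_eq_norm, e, norm_smul]
  have hb1 : b ≤ 1 := by linarith
  have := mem_ball_iff_norm.1 hv'
  calc ‖b‖ * ‖v' - v‖ ≤ 1 * ‖v' - v‖ := by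
        apply mul_le_mul_of_nonneg_right _ (norm_nonneg _)
        rw [Real.norm_eq_abs, abs_of_nonneg hb]; exact hb1
    _ = ‖v' - v‖ := one_mul _
    _ < δ := this

lemma Kset_not_neg (hconv : IsProjConvex Ω) (hw : w ∈ coneT Ω) {v : V}
    (hv : v ∈ Kset Ω w) (hv' : -v ∈ Kset Ω w) : False := by
  have hv0 : v ≠ 0 := ne_zero_of_mem (Kset_sub hv)
  have hw0 : w ≠ 0 := ne_zero_of_mem hw
  by_cases hpar : Projectivization.mk ℝ w hw0 = Projectivization.mk ℝ v hv0
  · obtain ⟨t, ht⟩ := (mk_eq_mk_iff' ℝ v w hv0 hw0).1 hpar.symm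
    -- ht : t • w = v
    have ht0 : t ≠ 0 := fun h => hv0 (by rw [← ht, h, zero_smul])
    have seg0 : ∀ s : ℝ, s < 0 → ∀ z : V, s • w = z → z ∈ Kset Ω w → False := by
      intro s hs z hz hzK
      have h0 : (0 : V) ∈ segment ℝ w z := by
        refine ⟨-s / (1 - s), 1 / (1 - s), ?_, ?_, ?_, ?_⟩
        · apply div_nonneg (by linarith) (by linarith)
        · apply div_nonneg (by norm_num) (by linarith)
        · rw [← add_div, div_eq_one_iff_eq (by linarith : (1:ℝ) - s ≠ 0)]; ring
        · rw [← hz, smul_smul]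
          have : -s / (1 - s) + 1 / (1 - s) * s = 0 := by field_simp; ring
          rw [← add_smul, this, zero_smul]
      exact ne_zero_of_mem (hzK h0) rfl
    rcases ht0.lt_or_gt with htneg | htpos
    · exact seg0 t htneg v ht hv
    · refine seg0 (-t) (by linarith) (-v) ?_ hv'
      rw [neg_smul, ht]
  · have hall : ∀ e f : ℝ, ∀ _ : e • w + f • v ≠ 0, e • w + f • v ∈ coneT Ω := by
      have half : ∀ e f : ℝ, 0 ≤ e → e • w + f • v ≠ 0 → e • w + f • v ∈ coneT Ω := by
        intro e f he h
        rcases le_or_gt 0 f with hf | hf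
        · refine Cw hv he hf ?_
          rintro ⟨h1, h2⟩; exact h (by rw [h1, h2, zero_smul, zero_smul, add_zero])
        · have e2 : e • w + f • v = e • w + (-f) • (-v) := by
            rw [neg_smul, smul_neg, neg_neg]
          rw [e2]
          refine Cw hv' he (by linarith) ?_
          rintro ⟨h1, h2⟩
          apply h
          rw [h1, zero_smul, zero_add]
          have : f = 0 := by linarith
          rw [this, zero_smul]
      intro e f h
      rcases le_or_gt 0 e with he | he
      · exact half e f he h
      · have e2 : e • w + f • v = -((-e) • w + (-f) • v) := by
          rw [neg_smul, neg_smul]; abel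
        have h' : (-e) • w + (-f) • v ≠ 0 := by
          intro hz
          apply h
          rw [e2, hz, neg_zero]
        rw [e2]
        exact neg_mem (half (-e) (-f) (by linarith) h')
    exact line hconv hw0 hv0 hpar (mk_mem hw _) (mk_mem (Kset_sub hv) _) hall

lemma of_QQ (hw : w ∈ coneT Ω) {v : V} (hv0 : v ≠ 0) (hq : QQ Ω w v) :
    v ∈ Kset Ω w ∨ -v ∈ Kset Ω w := by
  have hw0 : w ≠ 0 := ne_zero_of_mem hw
  by_cases hpar : ∃ t : ℝ, t < 0 ∧ v = t • w
  · right
    obtain ⟨t, ht, rfl⟩ := hpar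
    rintro x ⟨a, b, ha, hb, hab, rfl⟩
    have e : a • w + b • (-(t • w)) = (a + b * (-t)) • w := by
      rw [smul_neg, smul_smul, add_smul, mul_neg, neg_smul]
    rw [e]
    have hpos : 0 < a + b * (-t) := by
      rcases ha.lt_or_eq with h | h
      · nlinarith
      · have hb1 : b = 1 := by linarith
        rw [← h, hb1]; simp; linarith
    exact smul_mem hw hpos.ne'
  · left
    rintro x ⟨a, b, ha, hb, hab, rfl⟩
    have h : a • w + b • v ≠ 0 := by
      intro hz
      by_cases hb0 : b = 0
      · have ha1 : a = 1 := by rw [hb0] at hab; linarith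
        apply hw0
        have : a • w = 0 := by rwa [hb0, zero_smul, add_zero] at hz
        rw [ha1, one_smul] at this
        exact this
      · have hv : v = (-(a / b)) • w := by
          have : b • v = -(a • w) := by
            rw [eq_neg_iff_add_eq_zero, add_comm]; exact hz
          have := congrArg (fun z => (b⁻¹ : ℝ) • z) this
          simp only [smul_smul, inv_mul_cancel₀ hb0, one_smul, smul_neg] at this
          rw [this, div_eq_inv_mul, neg_smul]
        have ha0 : a ≠ 0 := by
          intro h0
          apply hv0
          rw [hv, h0, zero_div, neg_zero, zero_smul]
        have : -(a / b) < 0 := by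
          have : 0 < a / b := div_pos (ha.lt_of_ne' ha0) (hb.lt_of_ne' hb0)
          linarith
        exact hpar ⟨-(a / b), this, hv⟩
    exact hq a b ha hb h

lemma mem_Kset_or_neg (hconv : IsProjConvex Ω) (hw : w ∈ coneT Ω) {v : V}
    (hv : v ∈ coneT Ω) : v ∈ Kset Ω w ∨ -v ∈ Kset Ω w := by
  rcases comb hconv hw hv with hq | hq
  · exact of_QQ hw (ne_zero_of_mem hv) hq
  · rcases of_QQ hw (neg_ne_zero.2 (ne_zero_of_mem hv)) hq with h | h
    · exact Or.inr h
    · rw [neg_neg] at h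
      exact Or.inl h

lemma mem_of_closure (hconv : IsProjConvex Ω) (hΩo : IsOpen Ω) (hw : w ∈ coneT Ω) {v : V}
    (hv : v ∈ coneT Ω) (hcl : v ∈ closure (Kset Ω w)) : v ∈ Kset Ω w := by
  rcases mem_Kset_or_neg hconv hw hv with h | h
  · exact h
  · exfalso
    obtain ⟨δ, hδ, hball⟩ := Metric.isOpen_iff.1 (Kset_open hΩo) _ h
    obtain ⟨v', hv'K, hd⟩ := Metric.mem_closure_iff.1 hcl δ hδ
    have : -v' ∈ Metric.ball (-v) δ := by
      have e : (-v') - (-v) = v - v' := by abel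
      rw [Metric.mem_ball, dist_eq_norm, e, ← dist_eq_norm]
      exact hd
    exact Kset_not_neg hconv hw hv'K (hball this)

lemma seg_sub_Kset (hconv : IsProjConvex Ω) (hΩo : IsOpen Ω) (hw : w ∈ coneT Ω) {u y : V}
    (hu : u ∈ Kset Ω w) (hseg : segment ℝ u y ⊆ coneT Ω) : y ∈ Kset Ω w := by
  set A := Kset Ω w with hA
  set B := coneT Ω \ closure A with hB
  have hBopen : IsOpen B := (isOpen_coneT hΩo).sdiff isClosed_closure
  have hcover : segment ℝ u y ⊆ A ∪ B := by
    intro x hx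
    by_cases h : x ∈ closure A
    · exact Or.inl (mem_of_closure hconv hΩo hw (hseg hx) h)
    · exact Or.inr ⟨hseg hx, h⟩
  have hdisj : Disjoint A B := by
    rw [Set.disjoint_left]
    intro x hxA hxB
    exact hxB.2 (subset_closure hxA)
  have hsub := (convex_segment u y).isPreconnected.subset_left_of_subset_union
    (Kset_open hΩo) hBopen hdisj hcover ⟨u, left_mem_segment ℝ u y, hu⟩
  exact hsub (right_mem_segment ℝ u y)

lemma pair (hconv : IsProjConvex Ω) (hΩo : IsOpen Ω) (hw : w ∈ coneT Ω) {u v : V}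
    (hu : u ∈ Kset Ω w) (hv : v ∈ Kset Ω w) {a b : ℝ} (ha : 0 ≤ a) (hb : 0 ≤ b)
    (hab : ¬(a = 0 ∧ b = 0)) : a • u + b • v ∈ Kset Ω w := by
  have hu0 : u ≠ 0 := ne_zero_of_mem (Kset_sub hu)
  have hv0 : v ≠ 0 := ne_zero_of_mem (Kset_sub hv)
  by_cases hpar : Projectivization.mk ℝ u hu0 = Projectivization.mk ℝ v hv0
  · obtain ⟨t, ht⟩ := (mk_eq_mk_iff' ℝ u v hu0 hv0).1 hpar
    -- ht : t • v = u
    have ht0 : t ≠ 0 := fun h => hu0 (by rw [← ht, h, zero_smul])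
    have htpos : 0 < t := by
      rcases ht0.lt_or_gt with h | h
      · exfalso
        have : -u ∈ Kset Ω w := by
          have : -u = (-t) • v := by rw [neg_smul, ht]
          rw [this]
          exact Kset_smul hv (by linarith)
        exact Kset_not_neg hconv hw hu this
      · exact h
    have e : a • u + b • v = (a * t + b) • v := by rw [← ht, smul_smul, ← add_smul]
    have hco : 0 < a * t + b := by
      rcases ha.lt_or_eq with h | h
      · nlinarith
      · rcases hb.lt_or_eq with h2 | h2
        · nlinarith
        · exact absurd ⟨h.symm, h2.symm⟩ hab
    rw [e]
    exact Kset_smul hv hco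
  · have hind : ∀ α β : ℝ, ¬(α = 0 ∧ β = 0) → α • u + β • v ≠ 0 := by
      intro α β hαβ hz
      by_cases hβ : β = 0
      · have hα : α ≠ 0 := fun h => hαβ ⟨h, hβ⟩
        apply hu0
        rw [hβ, zero_smul, add_zero] at hz
        exact (smul_eq_zero.1 hz).resolve_left hα
      · apply hpar
        have hv' : v = (-(α / β)) • u := by
          have h1 : β • v = -(α • u) := by
            rw [eq_neg_iff_add_eq_zero, add_comm]; exact hz
          have := congrArg (fun z => (β⁻¹ : ℝ) • z) h1
          simp only [smul_smul, inv_mul_cancel₀ hβ, one_smul, smul_neg] at this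
          rw [this, div_eq_inv_mul, neg_smul]
        have hαβ0 : -(α / β) ≠ 0 := by
          intro h
          apply hv0
          rw [hv', h, zero_smul]
        exact ((mk_eq_mk_iff' ℝ u v hu0 hv0).2 ⟨(-(α / β))⁻¹, by
          rw [hv', smul_smul, inv_mul_cancel₀ hαβ0, one_smul]⟩)
    rcases comb hconv (Kset_sub hu) (Kset_sub hv) with hq | hq
    · -- the affine segment [u, v] lies in the cone
      have hseg : segment ℝ u v ⊆ coneT Ω := by
        rintro x ⟨α, β, hα, hβ, hαβ, rfl⟩
        refine hq α β hα hβ (hind α β ?_)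
        rintro ⟨h1, h2⟩; rw [h1, h2] at hαβ; norm_num at hαβ
      by_cases hb0 : b = 0
      · have ha0 : a ≠ 0 := fun h => hab ⟨h, hb0⟩
        have : a • u + b • v = a • u := by rw [hb0, zero_smul, add_zero]
        rw [this]
        exact Kset_smul hu (ha.lt_of_ne' ha0)
      · by_cases ha0 : a = 0
        · have : a • u + b • v = b • v := by rw [ha0, zero_smul, zero_add]
          rw [this]
          exact Kset_smul hv (hb.lt_of_ne' hb0)
        · have hapos : 0 < a := ha.lt_of_ne' ha0
          have hbpos : 0 < b := hb.lt_of_ne' hb0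
          have hsum : 0 < a + b := by linarith
          set m := (a / (a + b)) • u + (b / (a + b)) • v with hm
          have hmseg : m ∈ segment ℝ u v :=
            ⟨a / (a + b), b / (a + b), by positivity, by positivity, by field_simp, rfl⟩
          have hseg2 : segment ℝ u m ⊆ coneT Ω :=
            Set.Subset.trans
              ((convex_segment u v).segment_subset (left_mem_segment ℝ u v) hmseg) hseg
          have hmK : m ∈ Kset Ω w := seg_sub_Kset hconv hΩo hw hu hseg2
          have e : a • u + b • v = (a + b) • m := by
            rw [hm, smul_add, smul_smul, smul_smul, mul_div_cancel₀ _ hsum.ne',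
              mul_div_cancel₀ _ hsum.ne']
          rw [e]
          exact Kset_smul hmK hsum
    · exfalso
      have hseg : segment ℝ u (-v) ⊆ coneT Ω := by
        rintro x ⟨α, β, hα, hβ, hαβ, rfl⟩
        have e : α • u + β • (-v) = α • u + (-β) • v := by rw [neg_smul, smul_neg]
        have hne : α • u + β • (-v) ≠ 0 := by
          rw [e]
          refine hind α (-β) ?_
          rintro ⟨h1, h2⟩
          rw [h1] at hαβ
          have : β = 0 := by linarith
          rw [this] at hαβ; norm_num at hαβ
        exact hq α β hα hβ hne
      exact Kset_not_neg hconv hw hv (seg_sub_Kset hconv hΩo hw hu hseg)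

lemma Kset_convex (hconv : IsProjConvex Ω) (hΩo : IsOpen Ω) (hw : w ∈ coneT Ω) :
    Convex ℝ (Kset Ω w) := by
  intro u hu v hv a b ha hb hab
  refine pair hconv hΩo hw hu hv ha hb ?_
  rintro ⟨h1, h2⟩; rw [h1, h2] at hab; norm_num at hab

end SepAux

open SepAux in
/-- If `C` is a saturated multi-convex set and `p ∉ C`, then there is an irreducible convex set
(the complement of a projective hyperplane) containing `C` and avoiding `p`. -/
theorem exists_irreducible_separating
    {V : Type*} [NormedAddCommGroup V] [NormedSpace ℝ V] [FiniteDimensional ℝ V]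
    (h2 : 2 ≤ Module.finrank ℝ V)
    (C : Set (ℙ ℝ V)) (hC : IsSatMultiConvex C) (p : ℙ ℝ V) (hp : p ∉ C) :
    ∃ φ : Module.Dual ℝ V, φ ≠ 0 ∧ C ⊆ {x : ℙ ℝ V | φ x.rep ≠ 0} ∧ φ p.rep = 0 := by
  obtain ⟨F, -, hF, rfl⟩ := hC
  have : ∃ Ω ∈ F, p ∉ Ω := by
    by_contra h
    push_neg at h
    exact hp (Set.mem_sInter.2 h)
  obtain ⟨Ω, hΩF, hpΩ⟩ := this
  obtain ⟨hΩo, hconv⟩ := hF Ω hΩF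
  have hCsub : ⋂₀ F ⊆ Ω := Set.sInter_subset_of_mem hΩF
  rcases Set.eq_empty_or_nonempty Ω with hemp | ⟨q0, hq0⟩
  · -- the trivial case : `C` is empty
    have hlt : Submodule.span ℝ {p.rep} < ⊤ := by
      rw [lt_top_iff_ne_top]
      intro htop
      have h1 : Module.finrank ℝ (Submodule.span ℝ {p.rep}) = 1 :=
        finrank_span_singleton p.rep_nonzero
      rw [htop, finrank_top] at h1
      omega
    obtain ⟨φ, hφ0, hφmap⟩ :=
      Submodule.exists_dual_map_eq_bot_of_lt_top hlt inferInstance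
    refine ⟨φ, hφ0, ?_, ?_⟩
    · intro x hx
      exact absurd (hCsub hx) (by rw [hemp]; exact Set.notMem_empty x)
    · have : φ p.rep ∈ Submodule.map φ (Submodule.span ℝ {p.rep}) :=
        ⟨p.rep, Submodule.mem_span_singleton_self _, rfl⟩
      rw [hφmap] at this
      exact this
  · set w := q0.rep with hwdef
    have hw : w ∈ coneT Ω := ⟨q0.rep_nonzero, by rw [Projectivization.mk_rep]; exact hq0⟩
    have hdisj : Disjoint (Kset Ω w) ((Submodule.span ℝ {p.rep} : Submodule ℝ V) : Set V) := by
      rw [Set.disjoint_left]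
      intro x hxK hxS
      obtain ⟨c, hc⟩ := Submodule.mem_span_singleton.1 hxS
      have hx0 : x ≠ 0 := ne_zero_of_mem (Kset_sub hxK)
      have hc0 : c ≠ 0 := by
        intro h
        apply hx0
        rw [← hc, h, zero_smul]
      have hrep : p.rep ∈ coneT Ω := by
        have := smul_mem (Kset_sub hxK) (t := c⁻¹) (inv_ne_zero hc0)
        rwa [← hc, smul_smul, inv_mul_cancel₀ hc0, one_smul] at this
      exact hpΩ (by rw [← Projectivization.mk_rep p]; exact mk_mem hrep _)
    obtain ⟨f, u, hfu1, hfu2⟩ := geometric_hahn_banach_open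
      (Kset_convex hconv hΩo hw) (Kset_open hΩo)
      (Submodule.span ℝ {p.rep}).convex hdisj
    have hu0 : u ≤ 0 := by
      have := hfu2 0 (Submodule.zero_mem _)
      rwa [map_zero] at this
    have hfp : f p.rep = 0 := by
      by_contra hne
      have hmem : ((u - 1) / f p.rep) • p.rep ∈ (Submodule.span ℝ {p.rep} : Submodule ℝ V) :=
        Submodule.smul_mem _ _ (Submodule.mem_span_singleton_self _)
      have := hfu2 _ hmem
      rw [map_smul, smul_eq_mul, div_mul_cancel₀ _ hne] at this
      linarith
    have hfw : f w < u := hfu1 w (w_mem_Kset hw)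
    refine ⟨(f : V →ₗ[ℝ] ℝ), ?_, ?_, hfp⟩
    · intro h
      have : f w = 0 := by
        have := congrArg (fun g => g w) h
        simpa using this
      linarith
    · intro x hx
      have hxrep : x.rep ∈ coneT Ω :=
        ⟨x.rep_nonzero, by rw [Projectivization.mk_rep]; exact hCsub hx⟩
      rcases mem_Kset_or_neg hconv hw hxrep with h | h
      · have := hfu1 _ h
        simp only [Set.mem_setOf_eq, ContinuousLinearMap.coe_coe]
        intro hz
        rw [hz] at this
        linarith
      · have := hfu1 _ h
        rw [map_neg] at this
        simp only [Set.mem_setOf_eq, ContinuousLinearMap.coe_coe]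
        intro hz
        rw [hz] at this
        norm_num at this
        linarith
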